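/- Let n ≥ 4, let V be an n-dimensional real vector space with a positive definite symmetric bilinear form h (locally strongly convex case), let 𝒮 be an h-self-adjoint endomorphism whose spectrum consists of exactly two distinct eigenvalues λ₁ and λ₂ (the affine principal curvatures), S(X,Y) = h(X,𝒮Y), R* = (1/2) S∧S. Then R*·R* = λ₁λ₂·Q(h, R*). -/

import Mathlib

namespace OVAff

variable {V : Type*} [AddCommGroup V] [Module ℝ V]

/-- Kulkarni–Nomizu product of two (0,2)-tensors. -/
noncomputable def KN (E F : V → V → ℝ) : V → V → V → V → ℝ := fun X₁ X₂ X₃ X₄ =>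
  E X₁ X₄ * F X₂ X₃ + E X₂ X₃ * F X₁ X₄ - E X₁ X₃ * F X₂ X₄ - E X₂ X₄ * F X₁ X₃

/-- Kulkarni–Nomizu product of a (0,2)-tensor with a (0,4)-tensor. -/
noncomputable def KN4 (E : V → V → ℝ) (T : V → V → V → V → ℝ) :
    V → V → V → V → V → V → ℝ := fun X₁ X₂ X₃ X₄ Y₁ Y₂ =>
  E X₁ X₄ * T X₂ X₃ Y₁ Y₂ + E X₂ X₃ * T X₁ X₄ Y₁ Y₂
    - E X₁ X₃ * T X₂ X₄ Y₁ Y₂ - E X₂ X₄ * T X₁ X₃ Y₁ Y₂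

/-- (X ∧_A Y) Z = A(Y,Z) X − A(X,Z) Y. -/
noncomputable def wedgeVec (A : V → V → ℝ) (X Y Z : V) : V := A Y Z • X - A X Z • Y

/-- Tachibana operator Q(A,T) on a (0,2)-tensor T. -/
noncomputable def Q2 (A T : V → V → ℝ) : V → V → V → V → ℝ :=
  fun X₁ X₂ X Y => -(T (wedgeVec A X Y X₁) X₂ + T X₁ (wedgeVec A X Y X₂))

/-- Tachibana operator Q(A,T) on a (0,4)-tensor T. -/
noncomputable def Q4 (A : V → V → ℝ) (T : V → V → V → V → ℝ) :
    V → V → V → V → V → V → ℝ := fun X₁ X₂ X₃ X₄ X Y =>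
  -(T (wedgeVec A X Y X₁) X₂ X₃ X₄ + T X₁ (wedgeVec A X Y X₂) X₃ X₄
    + T X₁ X₂ (wedgeVec A X Y X₃) X₄ + T X₁ X₂ X₃ (wedgeVec A X Y X₄))

/-- The derivation B·T of a curvature operator family ℬ (with h(ℬ(X,Y)Z,W)=B(X,Y,Z,W))
acting on a (0,2)-tensor T. -/
noncomputable def dot2 (ℬ : V → V → V → V) (T : V → V → ℝ) : V → V → V → V → ℝ :=
  fun X₁ X₂ X Y => -(T (ℬ X Y X₁) X₂ + T X₁ (ℬ X Y X₂))

/-- The derivation B·T acting on a (0,4)-tensor T. -/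
noncomputable def dot4 (ℬ : V → V → V → V) (T : V → V → V → V → ℝ) :
    V → V → V → V → V → V → ℝ := fun X₁ X₂ X₃ X₄ X Y =>
  -(T (ℬ X Y X₁) X₂ X₃ X₄ + T X₁ (ℬ X Y X₂) X₃ X₄
    + T X₁ X₂ (ℬ X Y X₃) X₄ + T X₁ X₂ X₃ (ℬ X Y X₄))

/-- Ricci contraction of a (0,4)-tensor with respect to an h-orthonormal basis `e`
with signs `ε`. -/
noncomputable def ricci {n : ℕ} (ε : Fin n → ℝ) (e : Fin n → V)
    (B : V → V → V → V → ℝ) : V → V → ℝ :=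
  fun X Y => ∑ j, ε j * B (e j) X Y (e j)

/-- Scalar curvature of a (0,4)-tensor. -/
noncomputable def scal {n : ℕ} (ε : Fin n → ℝ) (e : Fin n → V)
    (B : V → V → V → V → ℝ) : ℝ :=
  ∑ j, ε j * ricci ε e B (e j) (e j)

/-- Weyl tensor of a (0,4)-tensor with respect to the metric h. -/
noncomputable def weyl {n : ℕ} (h : V → V → ℝ) (ε : Fin n → ℝ) (e : Fin n → V)
    (B : V → V → V → V → ℝ) : V → V → V → V → ℝ := fun X₁ X₂ X₃ X₄ =>
  B X₁ X₂ X₃ X₄ - (1 / ((n : ℝ) - 2)) * KN h (ricci ε e B) X₁ X₂ X₃ X₄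
    + (scal ε e B / (2 * ((n : ℝ) - 2) * ((n : ℝ) - 1))) * KN h h X₁ X₂ X₃ X₄


/-- locally strongly convex case with exactly two distinct affine principal
curvatures λ₁, λ₂: then R*·R* = λ₁λ₂·Q(h,R*). -/
theorem statement7
    {V : Type*} [AddCommGroup V] [Module ℝ V]
    (n : ℕ) (hn : 4 ≤ n)
    (h : LinearMap.BilinForm ℝ V)
    (hsymm : ∀ X Y, h X Y = h Y X)
    (hnd : ∀ X : V, (∀ Y, h X Y = 0) → X = 0)
    [FiniteDimensional ℝ V] (hdim : Module.finrank ℝ V = n)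
    (hpos : ∀ X : V, X ≠ 0 → 0 < h X X)
    (𝒮 : V →ₗ[ℝ] V) (hsa : ∀ X Y, h (𝒮 X) Y = h X (𝒮 Y))
    (S : V → V → ℝ) (hS : S = fun X Y => h X (𝒮 Y))
    (Rstar : V → V → V → V → ℝ)
    (hRstar : Rstar = fun X₁ X₂ X₃ X₄ => (1 / 2 : ℝ) * KN S S X₁ X₂ X₃ X₄)
    (ℬ : V → V → V → V)
    (hℬ : ∀ X Y Z W, h (ℬ X Y Z) W = Rstar X Y Z W)
    (l₁ l₂ : ℝ) (hne : l₁ ≠ l₂)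
    (heig : ∀ t : ℝ, Module.End.HasEigenvalue 𝒮 t ↔ t = l₁ ∨ t = l₂) :
    ∀ X₁ X₂ X₃ X₄ X Y,
      dot4 ℬ Rstar X₁ X₂ X₃ X₄ X Y
        = (l₁ * l₂) * Q4 (fun X Y => h X Y) Rstar X₁ X₂ X₃ X₄ X Y := by
  subst hS hRstar
  have quad : ∀ z : V, 𝒮 (𝒮 z) = (l₁ + l₂) • 𝒮 z - (l₁ * l₂) • z := by
    letI core : InnerProductSpace.Core ℝ V :=
      { inner := fun x y => h x y
        conj_inner_symm := fun x y => by simpa using hsymm y x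
        re_inner_nonneg := fun x => by
          rcases eq_or_ne x 0 with rfl | hx
          · simp
          · simpa using (hpos x hx).le
        definite := fun x hx => by
          by_contra h0
          exact (hpos x h0).ne' (by simpa using hx)
        add_left := fun x y z => by simp
        smul_left := fun x y r => by simp }
    letI : NormedAddCommGroup V := core.toNormedAddCommGroup
    letI : InnerProductSpace ℝ V := InnerProductSpace.ofCore core.toCore
    have hsym : 𝒮.IsSymmetric := fun x y => hsa x y
    have hev : ∀ i, 𝒮 (hsym.eigenvectorBasis hdim i)
        = hsym.eigenvalues hdim i • hsym.eigenvectorBasis hdim i :=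
      fun i => hsym.apply_eigenvectorBasis hdim i
    have hv : ∀ i, hsym.eigenvalues hdim i = l₁ ∨ hsym.eigenvalues hdim i = l₂ :=
      fun i => (heig _).mp (hsym.hasEigenvalue_eigenvalues hdim i)
    have hmap : (𝒮 ∘ₗ 𝒮) = (l₁ + l₂) • 𝒮 - (l₁ * l₂) • LinearMap.id := by
      apply (hsym.eigenvectorBasis hdim).toBasis.ext
      intro i
      simp only [LinearMap.comp_apply, LinearMap.sub_apply, LinearMap.smul_apply,
        LinearMap.id_apply, OrthonormalBasis.coe_toBasis]
      rw [hev i, map_smul, hev i]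
      rcases hv i with h1 | h1 <;> rw [h1] <;> match_scalars <;> ring
    intro z
    have := LinearMap.congr_fun hmap z
    simpa using this
  have hB : ∀ A B C : V, ℬ A B C = (h B (𝒮 C)) • 𝒮 A - (h A (𝒮 C)) • 𝒮 B := by
    intro A B C
    have key : ∀ W, h (ℬ A B C - ((h B (𝒮 C)) • 𝒮 A - (h A (𝒮 C)) • 𝒮 B)) W = 0 := by
      intro W
      have h1 := hℬ A B C W
      simp only [KN] at h1
      simp only [map_sub, map_smul, LinearMap.sub_apply, LinearMap.smul_apply,
        smul_eq_mul, hsa, h1]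
      ring
    exact sub_eq_zero.mp (hnd _ key)
  intro X₁ X₂ X₃ X₄ X Y
  have hswap : ∀ a c : V, h c a = h a c := fun a c => hsymm c a
  have hswapS : ∀ a c : V, h c (𝒮 a) = h a (𝒮 c) := fun a c => by rw [← hsa, hsymm]
  simp only [dot4, Q4, wedgeVec, KN, hB, map_sub, map_smul, quad,
    LinearMap.sub_apply, LinearMap.smul_apply, smul_eq_mul, hsa]
  simp only [hswap X₁ X₂, hswap X₁ X₃, hswap X₁ X₄, hswap X₁ X, hswap X₁ Y,
    hswap X₂ X₃, hswap X₂ X₄, hswap X₂ X, hswap X₂ Y,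
    hswap X₃ X₄, hswap X₃ X, hswap X₃ Y,
    hswap X₄ X, hswap X₄ Y, hswap X Y,
    hswapS X₁ X₂, hswapS X₁ X₃, hswapS X₁ X₄, hswapS X₁ X, hswapS X₁ Y,
    hswapS X₂ X₃, hswapS X₂ X₄, hswapS X₂ X, hswapS X₂ Y,
    hswapS X₃ X₄, hswapS X₃ X, hswapS X₃ Y,
    hswapS X₄ X, hswapS X₄ Y, hswapS X Y]
  ring


end OVAff
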